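/- Small witness property: let L be an LTS, ψ a conjunction-free formula in canonical form, and k ≥ |S| + 1. Then there exists an initialized run ρ of L with (ρ,k) ⊭ F_p^∞ ψ if and only if there exists a realisable ψ-avoiding sequence in L. -/

import Mathlib

open scoped Classical
open MeasureTheory

/-- A labelled transition system: a finite set of states `S`, an initial state,
a transition relation in which every state has at least one successor, and a
labeling of states by sets of atomic propositions. -/
structure LTS (S AP : Type) where
  init : S
  T : S → S → Prop
  lbl : S → Set AP
  succ_nonempty : ∀ s : S, ∃ t : S, T s t

variable {S AP : Type}

/-- A run of an LTS: an infinite sequence of states following the transitions. -/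
def IsRun (L : LTS S AP) (ρ : ℕ → S) : Prop := ∀ i : ℕ, L.T (ρ i) (ρ (i + 1))

/-- The shifted run `ρ[i..]`. -/
def shift (ρ : ℕ → S) (i : ℕ) : ℕ → S := fun n => ρ (n + i)

/-- A state formula: a (possibly empty, i.e. `false`) disjunction of literals,
each literal being a polarity (`true` = positive) paired with an atomic proposition. -/
abbrev StateFormula (AP : Type) := List (Bool × AP)

/-- A state `s` satisfies a state formula `θ`. -/
def SatState (L : LTS S AP) (θ : StateFormula AP) (s : S) : Prop :=
  ∃ p ∈ θ, if p.1 then p.2 ∈ L.lbl s else p.2 ∉ L.lbl s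

/-- A conjunction-free formula in canonical form `ψ = θ ∨ ⋁ F_p^∞ ψᵢ`, identified
with its tree `T(ψ)`: a root labeled by the state formula `θ` whose children are
the trees of the `ψᵢ`. -/
inductive CTree (AP : Type) : Type where
  | node : StateFormula AP → List (CTree AP) → CTree AP

/-- Satisfaction `(ρ, k) ⊨ ψ` for a canonical conjunction-free formula
`ψ = θ ∨ ⋁ F_p^∞ ψᵢ`. -/
def SatC (L : LTS S AP) : CTree AP → (ℕ → S) → ℕ → Prop
  | .node θ cs, ρ, k =>
      SatState L θ (ρ 0) ∨
      ∃ c ∈ cs.attach, ∀ i : ℕ, ∃ j ≤ k, SatC L c.1 (shift ρ (i + j)) k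
termination_by t => sizeOf t
decreasing_by
  have := List.sizeOf_lt_of_mem c.2
  simp only [CTree.node.sizeOf_spec]
  omega

/-- Satisfaction `(ρ, k) ⊨ F_p^∞ ψ` for a canonical conjunction-free formula `ψ`. -/
def SatFinfC (L : LTS S AP) (t : CTree AP) (ρ : ℕ → S) (k : ℕ) : Prop :=
  ∀ i : ℕ, ∃ j ≤ k, SatC L t (shift ρ (i + j)) k

/-- `Interleave l₁ l₂ l`: `l` is an interleaving (shuffle) of `l₁` and `l₂`. -/
inductive Interleave {α : Type} : List α → List α → List α → Prop where
  | nil : Interleave [] [] []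
  | left {a : α} {l₁ l₂ l : List α} : Interleave l₁ l₂ l → Interleave (a :: l₁) l₂ (a :: l)
  | right {a : α} {l₁ l₂ l : List α} : Interleave l₁ l₂ l → Interleave l₁ (a :: l₂) (a :: l)

mutual
/-- `LinExt t l`: the list `l` of state-formula labels enumerates the nodes of the
tree `t` in a linear order extending the ancestor order of the tree (the root comes
first, followed by an interleaving of linear extensions of the children's subtrees). -/
inductive LinExt {AP : Type} : CTree AP → List (StateFormula AP) → Prop where
  | node {θ : StateFormula AP} {cs : List (CTree AP)} {l : List (StateFormula AP)} :
      LinExtF cs l → LinExt (.node θ cs) (θ :: l)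

/-- Linear extensions of a forest: interleavings of linear extensions of its trees. -/
inductive LinExtF {AP : Type} : List (CTree AP) → List (StateFormula AP) → Prop where
  | nil : LinExtF [] []
  | cons {t : CTree AP} {ts : List (CTree AP)} {l₁ l₂ l : List (StateFormula AP)} :
      LinExt t l₁ → LinExtF ts l₂ → Interleave l₁ l₂ l → LinExtF (t :: ts) l
end

/-- A (nonempty) finite path of the LTS. -/
def IsPath (L : LTS S AP) (u : List S) : Prop := u ≠ [] ∧ u.Chain' L.T

/-- A loop: a finite path with at least one transition whose first and last states coincide. -/
def IsLoop (L : LTS S AP) (u : List S) : Prop :=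
  2 ≤ u.length ∧ u.Chain' L.T ∧ u.head? = u.getLast?

/-- The set `occ u` of states occurring in a finite sequence. -/
def occ (u : List S) : Set S := {s | s ∈ u}

/-- A `ψ`-avoiding sequence: a linear ordering of the nodes of `T(ψ)` extending the
ancestor order together with, for each node labeled by a state formula `θ`, a loop
whose set of states is a `θ`-avoiding cycle. -/
structure AvoidingSeq (L : LTS S AP) (ψ : CTree AP) where
  labels : List (StateFormula AP)
  loops : List (List S)
  linext : LinExt ψ labels
  length_eq : loops.length = labels.length
  isLoop : ∀ u ∈ loops, IsLoop L u
  avoid : ∀ p ∈ loops.zip labels, ∀ s ∈ p.1, ¬ SatState L p.2 s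

/-- `(vs, tail)` is a realisation witness for the loops `u₀, …, u_l` of an avoiding
sequence: finite paths `v₀, …, v_l` and an infinite run `v_{l+1} = tail`, where `v₀`
starts at the initial state, `vᵢ` starts in `occ u_{i-1}` for `1 ≤ i ≤ l+1`, and
`vᵢ` ends in `occ uᵢ` for `0 ≤ i ≤ l`. -/
def IsRealWitness (L : LTS S AP) (loops vs : List (List S)) (tail : ℕ → S) : Prop :=
  vs.length = loops.length ∧
  (∀ v ∈ vs, IsPath L v) ∧
  IsRun L tail ∧
  (∀ h : 0 < vs.length, (vs.get ⟨0, h⟩).head? = some L.init) ∧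
  (∀ (i : ℕ) (h : i + 1 < vs.length) (h' : i < loops.length) (s : S),
      (vs.get ⟨i + 1, h⟩).head? = some s → s ∈ occ (loops.get ⟨i, h'⟩)) ∧
  (∀ (i : ℕ) (h : i < vs.length) (h' : i < loops.length) (s : S),
      (vs.get ⟨i, h⟩).getLast? = some s → s ∈ occ (loops.get ⟨i, h'⟩)) ∧
  (∀ h : 0 < loops.length,
      tail 0 ∈ occ (loops.get ⟨loops.length - 1, Nat.sub_lt h Nat.one_pos⟩))

/-- An avoiding sequence is realisable in `L` if it admits a realisation witness. -/
def Realisable {ψ : CTree AP} (L : LTS S AP) (U : AvoidingSeq L ψ) : Prop :=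
  ∃ (vs : List (List S)) (tail : ℕ → S), IsRealWitness L U.loops vs tail
/-! ### Infrastructure -/

lemma shift_apply (ρ : ℕ → S) (i n : ℕ) : shift ρ i n = ρ (n + i) := rfl

lemma shift_shift (ρ : ℕ → S) (a b : ℕ) : shift (shift ρ a) b = shift ρ (b + a) := by
  funext n; simp [shift]; ring_nf

lemma IsRun.shift' {L : LTS S AP} {ρ : ℕ → S} (h : IsRun L ρ) (i : ℕ) :
    IsRun L (shift ρ i) := by
  intro n; simpa [shift, Nat.add_right_comm] using h (n + i)

lemma Interleave.mem_or {α : Type} {l₁ l₂ l : List α} (h : Interleave l₁ l₂ l) :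
    ∀ x ∈ l, x ∈ l₁ ∨ x ∈ l₂ := by
  induction h with
  | nil => simp
  | left h ih =>
    intro x hx
    rcases List.mem_cons.1 hx with rfl | hx
    · exact Or.inl (List.mem_cons_self)
    · rcases ih x hx with h | h
      · exact Or.inl (List.mem_cons_of_mem _ h)
      · exact Or.inr h
  | right h ih =>
    intro x hx
    rcases List.mem_cons.1 hx with rfl | hx
    · exact Or.inr (List.mem_cons_self)
    · rcases ih x hx with h | h
      · exact Or.inl h
      · exact Or.inr (List.mem_cons_of_mem _ h)

lemma Interleave.map {α β : Type} (f : α → β) {l₁ l₂ l : List α} (h : Interleave l₁ l₂ l) :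
    Interleave (l₁.map f) (l₂.map f) (l.map f) := by
  induction h with
  | nil => exact .nil
  | left _ ih => exact .left ih
  | right _ ih => exact .right ih

lemma Interleave.length_eq {α : Type} {l₁ l₂ l : List α} (h : Interleave l₁ l₂ l) :
    l₁.length + l₂.length = l.length := by
  induction h with
  | nil => rfl
  | left _ ih => simp [← ih]; omega
  | right _ ih => simp [← ih]; omega

lemma Interleave.sublist_left {α : Type} {l₁ l₂ l : List α} (h : Interleave l₁ l₂ l) :
    l₁.Sublist l := by
  induction h with
  | nil => exact List.Sublist.refl _
  | left _ ih => exact ih.cons₂ _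
  | right _ ih => exact ih.cons _

lemma Interleave.sublist_right {α : Type} {l₁ l₂ l : List α} (h : Interleave l₁ l₂ l) :
    l₂.Sublist l := by
  induction h with
  | nil => exact List.Sublist.refl _
  | left _ ih => exact ih.cons _
  | right _ ih => exact ih.cons₂ _

/-- Split a parallel list along an interleaving. -/
lemma interleave_split {α β : Type} {l₁ l₂ l : List α} (h : Interleave l₁ l₂ l) :
    ∀ ws : List β, ws.length = l.length →
    ∃ ws₁ ws₂ : List β, Interleave ws₁ ws₂ ws ∧ ws₁.length = l₁.length ∧
      ws₂.length = l₂.length ∧ (l₁.zip ws₁).Sublist (l.zip ws) ∧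
      (l₂.zip ws₂).Sublist (l.zip ws) := by
  induction h with
  | nil =>
    intro ws hws
    simp at hws
    subst hws
    exact ⟨[], [], Interleave.nil, by simp, by simp, by simp, by simp⟩
  | @left a l₁ l₂ l h ih =>
    intro ws hws
    cases ws with
    | nil => simp at hws
    | cons w ws' =>
      simp at hws
      obtain ⟨ws₁, ws₂, hi, h1, h2, hs1, hs2⟩ := ih ws' hws
      exact ⟨w :: ws₁, ws₂, .left hi, by simp [h1], h2, hs1.cons₂ _, hs2.cons _⟩
  | @right a l₁ l₂ l h ih =>
    intro ws hws
    cases ws with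
    | nil => simp at hws
    | cons w ws' =>
      simp at hws
      obtain ⟨ws₁, ws₂, hi, h1, h2, hs1, hs2⟩ := ih ws' hws
      exact ⟨ws₁, w :: ws₂, .right hi, h1, by simp [h2], hs1.cons _, hs2.cons₂ _⟩

/-- Merge two lists sorted by a numeric key. -/
def mrg {α : Type} (key : α → ℕ) : List α → List α → List α
  | [], l => l
  | a :: l₁, [] => a :: l₁
  | a :: l₁, b :: l₂ =>
      if key a ≤ key b then a :: mrg key l₁ (b :: l₂) else b :: mrg key (a :: l₁) l₂
termination_by l₁ l₂ => l₁.length + l₂.length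

lemma mrg_interleave {α : Type} (key : α → ℕ) :
    ∀ l₁ l₂ : List α, Interleave l₁ l₂ (mrg key l₁ l₂)
  | [], l => by
      rw [mrg]
      induction l with
      | nil => exact .nil
      | cons a l ih => exact .right ih
  | a :: l₁, [] => by
      rw [mrg]
      have : Interleave l₁ [] l₁ := by
        induction l₁ with
        | nil => exact .nil
        | cons b l ih => exact .left ih
      exact .left this
  | a :: l₁, b :: l₂ => by
      rw [mrg]
      split
      · exact .left (mrg_interleave key l₁ (b :: l₂))
      · exact .right (mrg_interleave key (a :: l₁) l₂)
termination_by l₁ l₂ => l₁.length + l₂.length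

lemma mrg_head_key {α : Type} (key : α → ℕ) :
    ∀ (l₁ l₂ : List α) (c : α), (∀ x ∈ l₁.head?, key c ≤ key x) →
      (∀ x ∈ l₂.head?, key c ≤ key x) → ∀ x ∈ (mrg key l₁ l₂).head?, key c ≤ key x
  | [], l, c => by intro _ h2; rw [mrg]; exact h2
  | a :: l₁, [], c => by intro h1 _; rw [mrg]; exact h1
  | a :: l₁, b :: l₂, c => by
      intro h1 h2
      rw [mrg]; split
      · simpa using h1 a (by simp)
      · simpa using h2 b (by simp)

lemma mrg_sorted {α : Type} (key : α → ℕ) :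
    ∀ l₁ l₂ : List α, List.Chain' (fun x y => key x ≤ key y) l₁ →
      List.Chain' (fun x y => key x ≤ key y) l₂ →
      List.Chain' (fun x y => key x ≤ key y) (mrg key l₁ l₂)
  | [], l => by intro _ h; rwa [mrg]
  | a :: l₁, [] => by intro h _; rwa [mrg]
  | a :: l₁, b :: l₂ => by
      intro h1 h2
      rw [mrg]; split
      · rename_i hab
        refine List.isChain_cons.2 ⟨?_, mrg_sorted key l₁ (b :: l₂) (List.isChain_cons.1 h1).2 h2⟩
        refine mrg_head_key key l₁ (b :: l₂) a (List.isChain_cons.1 h1).1 ?_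
        simpa using hab
      · rename_i hab
        refine List.isChain_cons.2 ⟨?_, mrg_sorted key (a :: l₁) l₂ h1 (List.isChain_cons.1 h2).2⟩
        refine mrg_head_key key (a :: l₁) l₂ b ?_ (List.isChain_cons.1 h2).1
        simp; omega
termination_by l₁ l₂ => l₁.length + l₂.length

lemma mrg_mem {α : Type} (key : α → ℕ) (l₁ l₂ : List α) :
    ∀ x ∈ mrg key l₁ l₂, x ∈ l₁ ∨ x ∈ l₂ :=
  (mrg_interleave key l₁ l₂).mem_or

/-- The segment `ρ p, ρ (p+1), …, ρ (p+len-1)` of a run. -/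
def seg (ρ : ℕ → S) (p len : ℕ) : List S := (List.range len).map (fun r => ρ (p + r))

@[simp] lemma seg_length (ρ : ℕ → S) (p len : ℕ) : (seg ρ p len).length = len := by
  simp [seg]

lemma seg_getElem (ρ : ℕ → S) (p len r : ℕ) (h : r < (seg ρ p len).length) :
    (seg ρ p len)[r] = ρ (p + r) := by
  simp [seg] at h ⊢

lemma seg_mem {ρ : ℕ → S} {p len : ℕ} {s : S} (h : s ∈ seg ρ p len) :
    ∃ r < len, s = ρ (p + r) := by
  simp [seg] at h
  obtain ⟨r, hr, rfl⟩ := h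
  exact ⟨r, hr, rfl⟩

lemma seg_ne_nil (ρ : ℕ → S) (p len : ℕ) (h : 1 ≤ len) : seg ρ p len ≠ [] := by
  intro hc
  have := congrArg List.length hc
  simp at this; omega

lemma seg_head? (ρ : ℕ → S) (p len : ℕ) (h : 1 ≤ len) :
    (seg ρ p len).head? = some (ρ p) := by
  rw [List.head?_eq_getElem?]
  rw [List.getElem?_eq_getElem (by simp; omega)]
  rw [seg_getElem]
  simp

lemma seg_getLast? (ρ : ℕ → S) (p len : ℕ) (h : 1 ≤ len) :
    (seg ρ p len).getLast? = some (ρ (p + (len - 1))) := by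
  rw [List.getLast?_eq_getElem?]
  rw [List.getElem?_eq_getElem (by simp; omega)]
  congr 1
  rw [seg_getElem]
  simp

lemma seg_chain' {L : LTS S AP} {ρ : ℕ → S} (h : IsRun L ρ) (p len : ℕ) :
    (seg ρ p len).Chain' L.T := by
  rw [seg, List.Chain', List.isChain_map]
  cases len with
  | zero => simp
  | succ n =>
    rw [List.isChain_range_succ]
    intro m _
    have := h (p + m)
    simpa [Nat.add_assoc] using this

lemma seg_isPath {L : LTS S AP} {ρ : ℕ → S} (h : IsRun L ρ) (p len : ℕ) (hl : 1 ≤ len) :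
    IsPath L (seg ρ p len) := ⟨seg_ne_nil ρ p len hl, seg_chain' h p len⟩

lemma chain'_le_of_mem_tail {k : ℕ} {a : ℕ} {ws : List ℕ}
    (h : List.Chain' (fun x y => x + k + 1 ≤ y) (a :: ws)) :
    ∀ b ∈ ws, a + k + 1 ≤ b := by
  intro b hb
  have ht : Trans (fun x y : ℕ => x + k + 1 ≤ y) (fun x y => x + k + 1 ≤ y) (fun x y => x + k + 1 ≤ y) :=
    ⟨fun h1 h2 => by omega⟩
  have := List.isChain_iff_pairwise.1 h
  exact (List.pairwise_cons.1 this).1 b hb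
/-! ### Violation: from an avoiding sequence of windows to failure of satisfaction -/

section Violation

variable (L : LTS S AP) (ρ : ℕ → S) (k : ℕ)

mutual

theorem viol : ∀ (t : CTree AP) (l : List (StateFormula AP)) (ws : List ℕ),
    LinExt t l → ws.length = l.length →
    List.Chain' (fun a b => a + k + 1 ≤ b) ws →
    (∀ pr ∈ l.zip ws, ∀ j ≤ k, ¬ SatState L pr.1 (ρ (pr.2 + j))) →
    ∀ a, ws.head? = some a → ∀ j ≤ k, ¬ SatC L t (shift ρ (a + j)) k
  | .node θ cs, l, ws => by
    intro hle hlen hch hW a ha j hj hsat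
    cases hle with
    | @node _ _ l' hf =>
      cases ws with
      | nil => simp at ha
      | cons a' ws' =>
        simp at ha
        obtain rfl : a = a' := ha.symm
        rw [SatC] at hsat
        rcases hsat with hsat | ⟨c, hc, hsat⟩
        · exact hW (θ, a) (by simp) j hj (by simpa [shift] using hsat)
        · simp at hlen
          have hF := violF cs l' ws' hf hlen hch.tail
            (fun pr hpr => hW pr (List.mem_cons_of_mem _ hpr))
          obtain ⟨ac, hac, hfail⟩ := hF c.1 c.2
          have hge : a + k + 1 ≤ ac := chain'_le_of_mem_tail hch ac hac
          obtain ⟨j', hj', hsat'⟩ := hsat (ac - (a + j))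
          rw [shift_shift] at hsat'
          have : ac - (a + j) + j' + (a + j) = ac + j' := by omega
          rw [this] at hsat'
          exact hfail j' hj' hsat'

theorem violF : ∀ (cs : List (CTree AP)) (l : List (StateFormula AP)) (ws : List ℕ),
    LinExtF cs l → ws.length = l.length →
    List.Chain' (fun a b => a + k + 1 ≤ b) ws →
    (∀ pr ∈ l.zip ws, ∀ j ≤ k, ¬ SatState L pr.1 (ρ (pr.2 + j))) →
    ∀ c ∈ cs, ∃ a ∈ ws, ∀ j ≤ k, ¬ SatC L c (shift ρ (a + j)) k
  | [], l, ws => by intro _ _ _ _ c hc; simp at hc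
  | t :: ts, l, ws => by
    intro hle hlen hch hW c hc
    cases hle with
    | @cons _ _ l₁ l₂ _ h1 h2 hint =>
      obtain ⟨ws₁, ws₂, hi, hl1, hl2, hs1, hs2⟩ := interleave_split hint ws (by omega)
      have htr : IsTrans ℕ (fun a b : ℕ => a + k + 1 ≤ b) := ⟨fun x y z h1 h2 => by omega⟩
      rcases List.mem_cons.1 hc with rfl | hc
      · -- c = t
        cases h1 with
        | @node θ cs' l' hf =>
          cases ws₁ with
          | nil => simp at hl1
          | cons a ws₁' =>
            refine ⟨a, ?_, ?_⟩
            · exact (hi.sublist_left.subset) (by simp)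
            · exact viol (.node θ cs') (θ :: l') (a :: ws₁') (.node hf) hl1
                (hch.sublist hi.sublist_left)
                (fun pr hpr => hW pr (hs1.subset hpr)) a rfl
      · -- c ∈ ts
        obtain ⟨a, ha, hfail⟩ := violF ts l₂ ws₂ h2 hl2
          (hch.sublist hi.sublist_right)
          (fun pr hpr => hW pr (hs2.subset hpr)) c hc
        exact ⟨a, hi.sublist_right.subset ha, hfail⟩

end

end Violation
/-! ### Extraction: from a failing run to an avoiding sequence -/

section Extract

variable [Fintype S] (L : LTS S AP) (ρ : ℕ → S) (k : ℕ)

/-- Per-node data: label, loop start position, loop length. -/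
def GoodEntry (x : StateFormula AP × ℕ × ℕ) : Prop :=
  2 ≤ x.2.2 ∧ ρ x.2.1 = ρ (x.2.1 + (x.2.2 - 1)) ∧
    ∀ j < x.2.2, ¬ SatState L x.1 (ρ (x.2.1 + j))

mutual

theorem extract : ∀ (t : CTree AP) (m : ℕ), Fintype.card S + 1 ≤ k →
    (∀ j ≤ k, ¬ SatC L t (shift ρ (m + j)) k) →
    ∃ D : List (StateFormula AP × ℕ × ℕ),
      LinExt t (D.map Prod.fst) ∧
      List.Chain' (fun x y => x.2.1 ≤ y.2.1) D ∧
      (∀ x ∈ D, m ≤ x.2.1) ∧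
      (∀ x ∈ D, GoodEntry L ρ x)
  | .node θ cs, m => by
    intro hk h
    -- pigeonhole: a repetition within the window
    have hcard : Fintype.card S < Fintype.card (Fin (k + 1)) := by
      simp [Fintype.card_fin]; omega
    obtain ⟨j₁, j₂, hne, heq⟩ :=
      Fintype.exists_ne_map_eq_of_card_lt (fun j : Fin (k + 1) => ρ (m + j)) hcard
    -- order them
    have hwlog : ∃ p q : ℕ, p < q ∧ q ≤ k ∧ ρ (m + p) = ρ (m + q) := by
      rcases lt_or_gt_of_ne (Fin.val_ne_of_ne hne) with hlt | hlt
      · exact ⟨j₁, j₂, hlt, by omega, heq⟩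
      · exact ⟨j₂, j₁, hlt, by omega, heq.symm⟩
    obtain ⟨p, q, hpq, hqk, hrep⟩ := hwlog
    -- state-formula failure on the window
    have hθ : ∀ j ≤ k, ¬ SatState L θ (ρ (m + j)) := by
      intro j hj hsat
      have := h j hj
      rw [SatC] at this
      exact this (Or.inl (by simpa [shift] using hsat))
    -- children windows
    have hch : ∀ c ∈ cs, ∃ i, ∀ j ≤ k, ¬ SatC L c (shift ρ ((m + k) + i + j)) k := by
      intro c hcmem
      have := h k le_rfl
      rw [SatC] at this
      push_neg at this
      obtain ⟨-, h2⟩ := this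
      have := h2 ⟨c, hcmem⟩ (List.mem_attach _ _)
      obtain ⟨i, hi⟩ := this
      refine ⟨i, fun j hj hsat => hi j hj ?_⟩
      rw [shift_shift]
      have : i + j + (m + k) = m + k + i + j := by omega
      rw [this]
      exact hsat
    obtain ⟨Df, hlinf, hsort, hge, hgood⟩ := extractF cs (m + k) hk hch
    refine ⟨(θ, m + p, q - p + 1) :: Df, ?_, ?_, ?_, ?_⟩
    · exact .node hlinf
    · refine List.isChain_cons.2 ⟨?_, hsort⟩
      intro y hy
      have : y ∈ Df := by
        cases Df with
        | nil => simp at hy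
        | cons z zs => simp at hy; subst hy; simp
      have := hge y this
      simp; omega
    · intro x hx
      rcases List.mem_cons.1 hx with rfl | hx
      · simp
      · have := hge x hx; simp; omega
    · intro x hx
      rcases List.mem_cons.1 hx with rfl | hx
      · refine ⟨by simp; omega, ?_, ?_⟩
        · show ρ (m + p) = ρ (m + p + (q - p + 1 - 1))
          rw [show m + p + (q - p + 1 - 1) = m + q from by omega]
          exact hrep
        · intro j hj hsat
          simp only at hj hsat
          rw [show m + p + j = m + (p + j) from by omega] at hsat
          exact hθ (p + j) (by omega) hsat
      · exact hgood x hx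

theorem extractF : ∀ (cs : List (CTree AP)) (m : ℕ), Fintype.card S + 1 ≤ k →
    (∀ c ∈ cs, ∃ i, ∀ j ≤ k, ¬ SatC L c (shift ρ (m + i + j)) k) →
    ∃ D : List (StateFormula AP × ℕ × ℕ),
      LinExtF cs (D.map Prod.fst) ∧
      List.Chain' (fun x y => x.2.1 ≤ y.2.1) D ∧
      (∀ x ∈ D, m ≤ x.2.1) ∧
      (∀ x ∈ D, GoodEntry L ρ x)
  | [], m => fun _ _ => ⟨[], .nil, .nil, by simp, by simp⟩
  | c :: cs', m => by
    intro hk h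
    obtain ⟨i, hi⟩ := h c (by simp)
    have hi' : ∀ j ≤ k, ¬ SatC L c (shift ρ ((m + i) + j)) k := hi
    obtain ⟨D₁, hl1, hs1, hg1, hq1⟩ := extract c (m + i) hk hi'
    obtain ⟨D₂, hl2, hs2, hg2, hq2⟩ :=
      extractF cs' m hk (fun c' hc' => h c' (List.mem_cons_of_mem _ hc'))
    refine ⟨mrg (fun x => x.2.1) D₁ D₂, ?_, ?_, ?_, ?_⟩
    · exact .cons hl1 hl2 ((mrg_interleave (fun x => x.2.1) D₁ D₂).map Prod.fst)
    · exact mrg_sorted _ D₁ D₂ hs1 hs2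
    · intro x hx
      rcases mrg_mem _ D₁ D₂ x hx with hx | hx
      · have := hg1 x hx; omega
      · exact hg2 x hx
    · intro x hx
      rcases mrg_mem _ D₁ D₂ x hx with hx | hx
      · exact hq1 x hx
      · exact hq2 x hx

end

end Extract
lemma seg_self_mem (ρ : ℕ → S) (p len : ℕ) (h : 1 ≤ len) : ρ p ∈ seg ρ p len := by
  simp [seg]
  exact ⟨0, by omega, by simp⟩

lemma forward [Fintype S] (L : LTS S AP) (ψ : CTree AP) (k : ℕ)
    (hk : Fintype.card S + 1 ≤ k) (ρ : ℕ → S) (hrun : IsRun L ρ)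
    (hinit : ρ 0 = L.init) (hns : ¬ SatFinfC L ψ ρ k) :
    ∃ U : AvoidingSeq L ψ, Realisable L U := by
  rw [SatFinfC] at hns
  push_neg at hns
  obtain ⟨m, hm⟩ := hns
  obtain ⟨D, hlin, hsort, hge, hgood⟩ := extract L ρ k ψ m hk hm
  have hDne : D ≠ [] := by
    intro hc
    subst hc
    simp at hlin
    cases hlin
  set n := D.length with hn
  have hnpos : 0 < n := by
    cases D with
    | nil => exact absurd rfl hDne
    | cons x xs => simp [hn]
  -- the avoiding sequence
  refine ⟨⟨D.map Prod.fst, D.map (fun x => seg ρ x.2.1 x.2.2), hlin, by simp, ?_, ?_⟩, ?_⟩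
  · -- isLoop
    intro u hu
    obtain ⟨x, hx, rfl⟩ := List.mem_map.1 hu
    obtain ⟨h2, hrep, _⟩ := hgood x hx
    refine ⟨by simp [h2], seg_chain' hrun _ _, ?_⟩
    rw [seg_head? _ _ _ (by omega), seg_getLast? _ _ _ (by omega)]
    exact congrArg some hrep
  · -- avoid
    intro pr hpr s hs
    rw [List.zip_map'] at hpr
    obtain ⟨x, hx, rfl⟩ := List.mem_map.1 hpr
    obtain ⟨r, hr, rfl⟩ := seg_mem hs
    exact (hgood x hx).2.2 r hr
  · -- realisability
    set q : ℕ → ℕ := fun i => (D.getD i ([], 0, 0)).2.1 with hqdef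
    have hq : ∀ i, (h : i < n) → q i = (D[i].2.1 : ℕ) := by
      intro i h
      rw [hqdef]
      simp only
      rw [List.getD_eq_getElem _ _ (by omega)]
    have hmono : ∀ i, i + 1 < n → q i ≤ q (i + 1) := by
      intro i h
      rw [hq i (by omega), hq (i+1) h]
      have := List.isChain_iff_getElem.1 hsort i (by omega)
      simpa using this
    set f : ℕ → List S :=
      fun i => if i = 0 then seg ρ 0 (q 0 + 1) else seg ρ (q (i-1)) (q i - q (i-1) + 1) with hf
    set vs : List (List S) := (List.range n).map f with hvs
    have hvslen : vs.length = n := by simp [hvs]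
    have hvget : ∀ i, (h : i < n) → vs[i]'(by rwa [hvslen]) = f i := by
      intro i h; simp [hvs]
    have hfval : ∀ i, f i = if i = 0 then seg ρ 0 (q 0 + 1)
        else seg ρ (q (i-1)) (q i - q (i-1) + 1) := fun i => by rw [hf]
    have hloopslen : (D.map (fun x => seg ρ x.2.1 x.2.2)).length = n := by simp [hn]
    have hlget : ∀ (i : ℕ) (h : i < n),
        (D.map (fun x => seg ρ x.2.1 x.2.2))[i]'(by rwa [hloopslen]) =
          seg ρ (q i) (D[i].2.2) := by
      intro i h
      rw [List.getElem_map, hq i h]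
    have hlen2 : ∀ i, (h : i < n) → 2 ≤ (D[i].2.2 : ℕ) :=
      fun i h => (hgood D[i] (List.getElem_mem _)).1
    refine ⟨vs, shift ρ (q (n-1)), ?_, ?_, hrun.shift' _, ?_, ?_, ?_, ?_⟩
    · simp [hvslen, hn]
    · intro v hv
      obtain ⟨i, hi, rfl⟩ := List.mem_map.1 hv
      rw [hfval i]
      split
      · exact seg_isPath hrun _ _ (by omega)
      · exact seg_isPath hrun _ _ (by omega)
    · intro h
      rw [List.get_eq_getElem, hvget 0 (by omega), hfval 0, if_pos rfl]
      rw [seg_head? _ _ _ (by omega), hinit]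
    · intro i h h' s hs
      have hin : i + 1 < n := by rwa [hvslen] at h
      have hin' : i < n := by rw [hloopslen] at h'; omega
      rw [List.get_eq_getElem, hvget (i+1) hin, hfval (i+1),
        if_neg (Nat.succ_ne_zero i), Nat.add_sub_cancel,
        seg_head? _ _ _ (by omega)] at hs
      have hs' : s = ρ (q i) := (Option.some.inj hs).symm
      rw [List.get_eq_getElem, hlget i hin', hs']
      simp only [occ, Set.mem_setOf_eq]
      exact seg_self_mem ρ _ _ (by have := hlen2 i hin'; omega)
    · intro i h h' s hs
      have hin : i < n := by rwa [hvslen] at h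
      rw [List.get_eq_getElem, hvget i hin, hfval i] at hs
      have hs' : s = ρ (q i) := by
        rcases Nat.eq_zero_or_pos i with rfl | hip
        · rw [if_pos rfl, seg_getLast? _ _ _ (by omega)] at hs
          simpa using (Option.some.inj hs).symm
        · rw [if_neg (by omega : ¬ i = 0), seg_getLast? _ _ _ (by omega)] at hs
          have hle : q (i-1) ≤ q i := by
            have := hmono (i-1) (by omega)
            rwa [Nat.sub_add_cancel hip] at this
          rw [show q (i-1) + (q i - q (i-1) + 1 - 1) = q i from by omega] at hs
          exact (Option.some.inj hs).symm
      rw [List.get_eq_getElem, hlget i hin, hs']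
      simp only [occ, Set.mem_setOf_eq]
      exact seg_self_mem ρ _ _ (by have := hlen2 i hin; omega)
    · intro h
      rw [List.get_eq_getElem]
      have hn1 : (D.map (fun x => seg ρ x.2.1 x.2.2)).length - 1 < n := by
        rw [hloopslen]; omega
      have : ((D.map (fun x => seg ρ x.2.1 x.2.2)).length - 1 : ℕ) = n - 1 := by
        rw [hloopslen]
      simp only [this]
      rw [hlget (n-1) (by omega)]
      simp only [occ, Set.mem_setOf_eq]
      have h0 : shift ρ (q (n-1)) 0 = ρ (q (n-1)) := by simp [shift]
      rw [h0]
      exact seg_self_mem ρ _ _ (by have := hlen2 (n-1) (by omega); omega)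
/-! ### Prepending a finite path to a run, and walking around a cycle -/

def prep (u : List S) (ρ : ℕ → S) : ℕ → S :=
  fun n => if h : n < u.length then u[n] else ρ (n - u.length)

lemma prep_lt (u : List S) (ρ : ℕ → S) (n : ℕ) (h : n < u.length) :
    prep u ρ n = u[n] := dif_pos h

lemma prep_ge (u : List S) (ρ : ℕ → S) (n : ℕ) (h : u.length ≤ n) :
    prep u ρ n = ρ (n - u.length) := dif_neg (by omega)

lemma prep_add (u : List S) (ρ : ℕ → S) (n : ℕ) :
    prep u ρ (u.length + n) = ρ n := by
  rw [prep_ge _ _ _ (by omega)]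
  congr 1
  omega

lemma isRun_prep {L : LTS S AP} {u : List S} {ρ : ℕ → S}
    (hch : u.Chain' L.T) (hρ : IsRun L ρ)
    (hlink : ∀ x, u.getLast? = some x → L.T x (ρ 0)) : IsRun L (prep u ρ) := by
  intro n
  rcases Nat.lt_or_ge (n + 1) u.length with h | h
  · rw [prep_lt _ _ _ (by omega), prep_lt _ _ _ h]
    exact List.isChain_iff_getElem.1 hch n (by omega)
  · rcases Nat.lt_or_ge n u.length with h' | h'
    · -- n = u.length - 1
      rw [prep_lt _ _ _ h', prep_ge _ _ _ h]
      have hn : n = u.length - 1 := by omega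
      have h0 : n + 1 - u.length = 0 := by omega
      rw [h0]
      apply hlink
      rw [List.getLast?_eq_getElem?, List.getElem?_eq_getElem (by omega)]
      subst hn
      rfl
    · rw [prep_ge _ _ _ h', prep_ge _ _ _ h]
      have : n + 1 - u.length = (n - u.length) + 1 := by omega
      rw [this]
      exact hρ _

/-! ### Walking around a cycle -/

def cyc (d : S) (u : List S) : ℕ → S := fun i => u.getD (i % (u.length - 1)) d

lemma cyc_val (d : S) {u : List S} (h2 : 2 ≤ u.length) (i : ℕ) :
    cyc d u i = u[i % (u.length - 1)]'(by
      have := Nat.mod_lt i (show 0 < u.length - 1 by omega); omega) := by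
  rw [cyc, List.getD_eq_getElem]

lemma cyc_mem (d : S) {u : List S} (h2 : 2 ≤ u.length) (i : ℕ) : cyc d u i ∈ u := by
  rw [cyc_val d h2]
  exact List.getElem_mem _

lemma cyc_idx (d : S) {u : List S} (h2 : 2 ≤ u.length) (a : ℕ) (ha : a < u.length - 1) :
    cyc d u a = u[a]'(by omega) := by
  rw [cyc_val d h2]
  simp [Nat.mod_eq_of_lt ha]

lemma head_eq_last {u : List S} (h2 : 2 ≤ u.length) (hhl : u.head? = u.getLast?) :
    u[0]'(by omega) = u[u.length - 1]'(by omega) := by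
  rw [List.head?_eq_getElem?, List.getLast?_eq_getElem?,
    List.getElem?_eq_getElem (by omega), List.getElem?_eq_getElem (by omega)] at hhl
  exact Option.some.inj hhl

lemma exists_cyc_idx (d : S) {u : List S} (h2 : 2 ≤ u.length) (hhl : u.head? = u.getLast?)
    {s : S} (hs : s ∈ u) : ∃ a < u.length - 1, cyc d u a = s := by
  obtain ⟨j, hj, rfl⟩ := List.mem_iff_getElem.1 hs
  rcases Nat.lt_or_ge j (u.length - 1) with h | h
  · exact ⟨j, h, cyc_idx d h2 j h⟩
  · have hj' : j = u.length - 1 := by omega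
    refine ⟨0, by omega, ?_⟩
    rw [cyc_idx d h2 0 (by omega)]
    subst hj'
    exact head_eq_last h2 hhl

lemma cyc_edge {L : LTS S AP} (d : S) {u : List S} (h2 : 2 ≤ u.length)
    (hch : u.Chain' L.T) (hhl : u.head? = u.getLast?) (i : ℕ) :
    L.T (cyc d u i) (cyc d u (i + 1)) := by
  have hnpos : 0 < u.length - 1 := by omega
  have hr : i % (u.length - 1) < u.length - 1 := Nat.mod_lt i hnpos
  rw [cyc_val d h2, cyc_val d h2]
  rcases Nat.lt_or_ge (i % (u.length - 1) + 1) (u.length - 1) with hc | hc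
  · have e : (i + 1) % (u.length - 1) = i % (u.length - 1) + 1 := by
      rw [Nat.add_mod, Nat.mod_eq_of_lt (show 1 < u.length - 1 by omega),
        Nat.mod_eq_of_lt (by omega)]
    simp only [e]
    exact List.isChain_iff_getElem.1 hch (i % (u.length - 1)) (by omega)
  · have hin : i % (u.length - 1) + 1 = u.length - 1 := by omega
    have e : (i + 1) % (u.length - 1) = 0 := by
      conv_lhs => rw [← Nat.mod_add_div i (u.length - 1)]
      rw [Nat.add_right_comm, Nat.add_mul_mod_self_left, hin, Nat.mod_self]
    have e2 : i % (u.length - 1) = u.length - 1 - 1 := by omega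
    simp only [e, e2]
    rw [head_eq_last h2 hhl]
    have hedge := List.isChain_iff_getElem.1 hch (u.length - 1 - 1) (by omega)
    convert hedge using 2
    omega

lemma cyc_mod (d : S) {u : List S} (h2 : 2 ≤ u.length) (i : ℕ) :
    cyc d u i = cyc d u (i % (u.length - 1)) := by
  rw [cyc_val d h2, cyc_val d h2]
  simp [Nat.mod_mod_of_dvd]
/-! ### Construction of a run from a realisable sequence of loops -/

lemma build (L : LTS S AP) (k : ℕ) :
    ∀ (ps : List (List S × List S)) (tail : ℕ → S),
    (∀ p ∈ ps, IsPath L p.1 ∧ IsLoop L p.2 ∧ ∃ s, p.1.getLast? = some s ∧ s ∈ occ p.2) →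
    IsRun L tail →
    List.Chain' (fun p q => ∃ s, q.1.head? = some s ∧ s ∈ occ p.2) ps →
    (∀ p, ps.getLast? = some p → tail 0 ∈ occ p.2) →
    ∃ (ρ : ℕ → S) (ws : List ℕ),
      IsRun L ρ ∧
      (∀ p, ps.head? = some p → ∀ s, p.1.head? = some s → ρ 0 = s) ∧
      (ps = [] → ρ = tail) ∧
      ws.length = ps.length ∧
      List.Chain' (fun a b => a + k + 1 ≤ b) ws ∧
      (∀ pr ∈ ps.zip ws, ∀ j ≤ k, ρ (pr.2 + j) ∈ occ pr.1.2) := by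
  intro ps
  induction ps with
  | nil =>
    intro tail _ htail _ _
    exact ⟨tail, [], htail, by simp, fun _ => rfl, by simp, .nil, by simp⟩
  | cons p ps' ih =>
    obtain ⟨v, u⟩ := p
    intro tail hall htail hchain hlast
    obtain ⟨⟨hvne, hvch⟩, ⟨h2, huch, hhl⟩, s, hslast, hsocc⟩ := hall (v, u) (by simp)
    dsimp only at hvne hvch h2 huch hhl hslast hsocc
    -- apply the induction hypothesis to the remaining pairs
    obtain ⟨ρ', ws', hρ'run, hρ'0, hρ'nil, hws'len, hws'ch, hwin'⟩ :=
      ih tail (fun p hp => hall p (List.mem_cons_of_mem _ hp)) htail hchain.tail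
        (by
          intro p hp
          apply hlast
          cases ps' with
          | nil => simp at hp
          | cons q qs => rwa [List.getLast?_cons_cons])
    -- the state where the remaining run starts, lies on the cycle `u`
    have htocc : ρ' 0 ∈ occ u := by
      cases ps' with
      | nil =>
        rw [hρ'nil rfl]
        exact hlast (v, u) (by simp)
      | cons q qs =>
        obtain ⟨s', hs'head, hs'occ⟩ := List.isChain_cons_cons.1 hchain |>.1
        rwa [hρ'0 q (by simp) s' hs'head]
    obtain ⟨a, ha, hcyca⟩ := exists_cyc_idx s h2 hhl (by exact hsocc)
    obtain ⟨b, hb, hcycb⟩ := exists_cyc_idx s h2 hhl (by exact htocc)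
    set N : ℕ := (u.length - 1) * (k + 2) + (b + (u.length - 1) - a) with hN
    have hmul : 1 * (k + 2) ≤ (u.length - 1) * (k + 2) :=
      Nat.mul_le_mul_right _ (by omega)
    have hN2 : k + 2 ≤ N := by omega
    have hcycN : cyc s u (a + N) = ρ' 0 := by
      have h3 : (u.length - 1) * (k + 3) = (u.length - 1) * (k + 2) + (u.length - 1) := by
        ring
      have e : a + N = b + (u.length - 1) * (k + 3) := by omega
      rw [e, cyc_mod s h2, Nat.add_mul_mod_self_left, Nat.mod_eq_of_lt hb, hcycb]
    have hcycrun : IsRun L (cyc s u) := fun i => cyc_edge s h2 huch hhl i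
    set w : List S := seg (cyc s u) (a + 1) (N - 1) with hw
    have hwlen : w.length = N - 1 := by simp [hw]
    have hwne : w ≠ [] := seg_ne_nil _ _ _ (by omega)
    set ρ : ℕ → S := prep (v ++ w) ρ' with hρ
    have hofflen : (v ++ w).length = v.length + (N - 1) := by simp [hwlen]
    have hρrun : IsRun L ρ := by
      refine isRun_prep ?_ hρ'run ?_
      · rw [List.Chain', List.isChain_append]
        refine ⟨hvch, seg_chain' hcycrun _ _, ?_⟩
        intro x hx y hy
        rw [hslast] at hx
        rw [hw, seg_head? _ _ _ (by omega)] at hy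
        obtain rfl : s = x := Option.some.inj hx
        obtain rfl : cyc s u (a + 1) = y := Option.some.inj hy
        have := cyc_edge (L := L) s h2 huch hhl a
        rwa [hcyca] at this
      · intro x hx
        rw [List.getLast?_append_of_ne_nil _ hwne, hw,
          seg_getLast? _ _ _ (by omega)] at hx
        have hx' : x = cyc s u (a + 1 + (N - 1 - 1)) := (Option.some.inj hx).symm
        have e : a + 1 + (N - 1 - 1) + 1 = a + N := by omega
        have := cyc_edge (L := L) s h2 huch hhl (a + 1 + (N - 1 - 1))
        rw [e, hcycN] at this
        rwa [hx']
    refine ⟨ρ, v.length :: ws'.map (· + (v.length + (N - 1))), hρrun, ?_, ?_, ?_, ?_, ?_⟩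
    · -- initial state
      intro p hp s₀ hs₀
      obtain rfl : (v, u) = p := Option.some.inj hp
      have hv0 : 0 < v.length := List.length_pos_iff.2 hvne
      rw [List.head?_eq_getElem?, List.getElem?_eq_getElem hv0] at hs₀
      obtain rfl : v[0] = s₀ := Option.some.inj hs₀
      rw [hρ, prep_lt _ _ _ (by simp; omega), List.getElem_append_left hv0]
    · intro hc; simp at hc
    · simp [hws'len]
    · -- spacing
      refine List.isChain_cons.2 ⟨?_, ?_⟩
      · intro b' hb'
        cases ws' with
        | nil => simp at hb'
        | cons c cs =>
          simp at hb'
          omega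
      · rw [List.isChain_map]
        refine hws'ch.imp ?_
        intro x y hxy
        omega
    · -- windows
      intro pr hpr j hj
      rw [List.zip_cons_cons] at hpr
      rcases List.mem_cons.1 hpr with rfl | hpr
      · -- the new loop
        show ρ (v.length + j) ∈ occ u
        have hjlt : v.length + j < (v ++ w).length := by rw [hofflen]; omega
        have e : ρ (v.length + j) = cyc s u (a + 1 + (v.length + j - v.length)) := by
          rw [hρ, prep_lt _ _ _ hjlt, List.getElem_append_right (by omega)]
          simp only [hw]
          rw [seg_getElem]
        rw [e]
        exact cyc_mem s h2 _
      · -- older loops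
        rw [List.zip_map_right] at hpr
        obtain ⟨⟨q, c⟩, hqc, rfl⟩ := List.mem_map.1 hpr
        show ρ (c + (v.length + (N - 1)) + j) ∈ occ q.2
        have e : c + (v.length + (N - 1)) + j = (v ++ w).length + (c + j) := by
          rw [hofflen]; omega
        rw [hρ, e, prep_add]
        exact hwin' (q, c) hqc j hj
lemma backward (L : LTS S AP) (ψ : CTree AP) (k : ℕ)
    (U : AvoidingSeq L ψ) (hre : Realisable L U) :
    ∃ ρ : ℕ → S, IsRun L ρ ∧ ρ 0 = L.init ∧ ¬ SatFinfC L ψ ρ k := by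
  obtain ⟨labels, loops, hlin, hleq, hloops, havoid⟩ := U
  obtain ⟨vs, tail, hlen, hpaths, htail, hinit0, hstart, hend, htl⟩ := hre
  simp only at *
  have hlabne : labels ≠ [] := by cases hlin; simp
  have hlpos : 0 < labels.length := List.length_pos_iff.2 hlabne
  have hloopos : 0 < loops.length := by omega
  set ps : List (List S × List S) := vs.zip loops with hps
  have hpslen : ps.length = loops.length := by simp [hps, hlen]
  have hpsget : ∀ i, (h : i < ps.length) →
      ps[i] = (vs[i]'(by simp [hps] at h; omega), loops[i]'(by simp [hps] at h; omega)) := by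
    intro i h
    simp [hps, List.getElem_zip]
  obtain ⟨ρ, ws, hρrun, hρ0, -, hwslen, hwch, hwin⟩ :=
    build L k ps tail
      (by
        intro p hp
        obtain ⟨i, hi, rfl⟩ := List.mem_iff_getElem.1 hp
        rw [hpsget i hi]
        have hivs : i < vs.length := by simp [hps] at hi; omega
        have hilo : i < loops.length := by simp [hps] at hi; omega
        refine ⟨hpaths _ (List.getElem_mem _), hloops _ (List.getElem_mem _), ?_⟩
        have hne : vs[i] ≠ [] := (hpaths _ (List.getElem_mem _)).1
        obtain ⟨s, hs⟩ := Option.isSome_iff_exists.1 (List.getLast?_isSome.2 hne)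
        exact ⟨s, hs, hend i hivs hilo s (by rwa [List.get_eq_getElem])⟩)
      htail
      (by
        rw [List.Chain', List.isChain_iff_getElem]
        intro i hi
        rw [hpsget i (by omega),
          hpsget (i+1) (by omega)]
        have hivs : i + 1 < vs.length := by simp [hps] at hi; omega
        have hilo : i < loops.length := by simp [hps] at hi; omega
        have hne : (vs[i+1]'hivs) ≠ [] := (hpaths _ (List.getElem_mem _)).1
        obtain ⟨s, hs⟩ := Option.isSome_iff_exists.1 (List.isSome_head?.2 hne)
        exact ⟨s, hs, hstart i hivs hilo s (by rwa [List.get_eq_getElem])⟩)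
      (by
        intro p hp
        have hpsne : ps ≠ [] := by
          intro hc
          rw [hc] at hpslen
          simp at hpslen
          omega
        rw [List.getLast?_eq_getElem?,
          List.getElem?_eq_getElem (by have := List.length_pos_iff.2 hpsne; omega)] at hp
        obtain rfl := (Option.some.inj hp).symm
        rw [hpsget _ (by have := List.length_pos_iff.2 hpsne; omega)]
        have := htl hloopos
        rw [List.get_eq_getElem] at this
        have e : ps.length - 1 = loops.length - 1 := by omega
        simpa [e] using this)
  refine ⟨ρ, hρrun, ?_, ?_⟩
  · -- initial state
    have hpspos : 0 < ps.length := by omega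
    apply hρ0 ps[0]
    · rw [List.head?_eq_getElem?, List.getElem?_eq_getElem hpspos]
    · rw [hpsget 0 hpspos]
      have := hinit0 (by simp [hps] at hpspos; omega)
      rwa [List.get_eq_getElem] at this
  · -- violation
    have hwslab : ws.length = labels.length := by omega
    have hW : ∀ pr ∈ labels.zip ws, ∀ j ≤ k, ¬ SatState L pr.1 (ρ (pr.2 + j)) := by
      intro pr hpr j hj hsat
      obtain ⟨i, hi, rfl⟩ := List.mem_iff_getElem.1 hpr
      simp only [List.getElem_zip] at hsat
      have hilab : i < labels.length := by simp at hi; omega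
      have hiws : i < ws.length := by simp at hi; omega
      have hips : i < ps.length := by omega
      have hilo : i < loops.length := by omega
      have hmem : (ps[i]'hips, ws[i]'hiws) ∈ ps.zip ws := by
        have : (ps.zip ws)[i]'(by simp; omega) = (ps[i]'hips, ws[i]'hiws) :=
          List.getElem_zip
        rw [← this]
        exact List.getElem_mem _
      have hocc := hwin _ hmem j hj
      rw [hpsget i hips] at hocc
      simp only [occ, Set.mem_setOf_eq] at hocc
      have hmem2 : ((loops[i]'hilo), (labels[i]'hilab)) ∈ loops.zip labels := by
        have : (loops.zip labels)[i]'(by simp; omega) = (loops[i]'hilo, labels[i]'hilab) :=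
          List.getElem_zip
        rw [← this]
        exact List.getElem_mem _
      exact havoid _ hmem2 _ hocc hsat
    have hwsne : ws ≠ [] := by
      intro hc
      rw [hc] at hwslen
      simp at hwslen
      omega
    cases ws with
    | nil => exact absurd rfl hwsne
    | cons a ws'' =>
      have hviol := viol L ρ k ψ labels (a :: ws'') hlin hwslab hwch hW a rfl
      intro hs
      rw [SatFinfC] at hs
      obtain ⟨j, hj, hsat⟩ := hs a
      exact hviol j hj hsat

/-- **small witness property.** For `ψ` conjunction-free canonical and
`k ≥ |S| + 1`: there is an initialized run `ρ` of `L` with `(ρ,k) ⊭ F_p^∞ ψ` iff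
there is a realisable `ψ`-avoiding sequence in `L`. -/
theorem small_witness [Fintype S] (L : LTS S AP) (ψ : CTree AP) (k : ℕ)
    (hk : Fintype.card S + 1 ≤ k) :
    (∃ ρ : ℕ → S, IsRun L ρ ∧ ρ 0 = L.init ∧ ¬ SatFinfC L ψ ρ k) ↔
    ∃ U : AvoidingSeq L ψ, Realisable L U := by
  constructor
  · rintro ⟨ρ, hrun, hinit, hns⟩
    exact forward L ψ k hk ρ hrun hinit hns
  · rintro ⟨U, hre⟩
    exact backward L ψ k U hre
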